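/- arXiv:2102.12872 — 2 statements merged into one kernel-verified Lean document; each statement's English description precedes it below -/
import Mathlib

section
/- Let q ≥ 2, d ≥ 2, n, k be integers with 1 ≤ k ≤ d/2 and n ≥ 2k, let 0 < ε ≤ 1/2, and let P ⊆ [0,1]^d be an (m, ε)-almost net in base q of size q^n·m. Let 𝓑 = [0, 1/q^{n−2k}) × [0,1)^{d−1}, let S = P ∩ 𝓑 = {v^1, …, v^τ}, and let U be the C(d,k)-by-τ complex matrix with rows indexed by k-element subsets J of {1,…,d} and entries U_{J,ℓ} = e_q(∑_{j∈J} X_j(v^ℓ)), and set A = (1/τ)·U·U*. Then every diagonal entry of A equals 1, and every off-diagonal entry of A has absolute value at most 2ε. -/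
open Finset

/-- A basic box in base `q` in `[0,1]^d` of volume `q^(-n)`: a product of basic intervals
`[a i / q ^ k i, (a i + 1) / q ^ k i)` with `∑ i, k i = n`. -/
def IsBasicBox (q d n : ℕ) (β : Set (Fin d → ℝ)) : Prop :=
  ∃ k a : Fin d → ℕ, (∀ i, a i + 1 ≤ q ^ k i) ∧ (∑ i, k i) = n ∧
    β = Set.univ.pi fun i =>
      Set.Ico ((a i : ℝ) / (q : ℝ) ^ k i) (((a i : ℝ) + 1) / (q : ℝ) ^ k i)

/-- `P ⊆ [0,1]^d` is an `(m, ε)`-almost net in base `q`, of size `q ^ n * m`. -/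
def IsAlmostNet (q d n : ℕ) (m ε : ℝ) (P : Finset (Fin d → ℝ)) : Prop :=
  (∀ x ∈ P, ∀ i, x i ∈ Set.Icc (0 : ℝ) 1) ∧
  (P.card : ℝ) = (q : ℝ) ^ n * m ∧
  ∀ β : Set (Fin d → ℝ), IsBasicBox q d n β →
    (1 - ε) * m ≤ (((P : Set (Fin d → ℝ)) ∩ β).ncard : ℝ) ∧
      (((P : Set (Fin d → ℝ)) ∩ β).ncard : ℝ) ≤ (1 + ε) * m
/-- The `j`-th base-`q` digit of `x ∈ [0,1)`: if `x = (0.x₁x₂x₃…)_q` then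
`digit q x j = x_j` (for `j ≥ 1`). -/
noncomputable def qdigit (q : ℕ) (x : ℝ) (j : ℕ) : ℕ :=
  (⌊x * (q : ℝ) ^ j⌋).toNat % q

/-- The box `𝓑 = [0, 1/q^(n−2k)) × [0,1)^(d−1)`. -/
def Bset (q d n k : ℕ) : Set (Fin d → ℝ) :=
  Set.univ.pi fun i =>
    if (i : ℕ) = 0 then Set.Ico (0 : ℝ) (1 / (q : ℝ) ^ (n - 2 * k)) else Set.Ico (0 : ℝ) 1

/-- For `v ∈ 𝓑`: `X₁(v)` is the `(n−2k+1)`-st base-`q` digit of the first coordinate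
(its first possibly nonzero digit), and `X_ℓ(v)` is the first digit of `v_ℓ` for `ℓ ≥ 2`. -/
noncomputable def Xfun (q d n k : ℕ) (v : Fin d → ℝ) (i : Fin d) : ℕ :=
  if (i : ℕ) = 0 then qdigit q (v i) (n - 2 * k + 1) else qdigit q (v i) 1

lemma mem_Ico_iff_floor (q : ℕ) (hq : 0 < q) (K : ℕ) (A : ℕ) (x : ℝ) :
    x ∈ Set.Ico ((A : ℝ) / (q : ℝ) ^ K) (((A : ℝ) + 1) / (q : ℝ) ^ K) ↔
      ⌊x * (q : ℝ) ^ K⌋ = A := by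
  have hqK : (0 : ℝ) < (q : ℝ) ^ K := by positivity
  rw [Set.mem_Ico, div_le_iff₀ hqK, lt_div_iff₀ hqK, Int.floor_eq_iff]
  push_cast
  exact Iff.rfl

lemma floor_succ_digit (q : ℕ) (hq : 0 < q) (K A b : ℕ) (x : ℝ)
    (hb : b < q) (hA : ⌊x * (q : ℝ) ^ K⌋ = A) :
    ((⌊x * (q : ℝ) ^ (K + 1)⌋ % q).toNat = b ↔ ⌊x * (q : ℝ) ^ (K + 1)⌋ = A * q + b) := by
  have hqK : (0 : ℝ) < (q : ℝ) ^ K := by positivity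
  have hq0 : (0 : ℝ) < (q : ℝ) := by exact_mod_cast hq
  set F := ⌊x * (q : ℝ) ^ (K + 1)⌋ with hF
  have h1 : (A : ℝ) ≤ x * (q : ℝ) ^ K := by
    have := Int.floor_le (x * (q : ℝ) ^ K); rw [hA] at this; exact_mod_cast this
  have h2 : x * (q : ℝ) ^ K < (A : ℝ) + 1 := by
    have := Int.lt_floor_add_one (x * (q : ℝ) ^ K); rw [hA] at this; exact_mod_cast this
  have hle : ((A : ℤ) * q : ℤ) ≤ F := by
    refine Int.le_floor.2 ?_
    push_cast; rw [pow_succ]; nlinarith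
  have hlt : F < (A : ℤ) * q + q := by
    refine Int.floor_lt.2 ?_
    push_cast; rw [pow_succ]; nlinarith
  have hr : F % q = F - (A : ℤ) * q := by
    conv_lhs => rw [show F = (F - (A : ℤ) * q) + (q : ℤ) * A by ring]
    rw [Int.add_mul_emod_self_left, Int.emod_eq_of_lt (by omega) (by omega)]
  rw [hr]; push_cast; omega

lemma split_digit (q : ℕ) (hq : 0 < q) (K A b : ℕ) (hb : b < q) (x : ℝ) :
    (x ∈ Set.Ico ((A : ℝ) / (q : ℝ) ^ K) (((A : ℝ) + 1) / (q : ℝ) ^ K) ∧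
        (⌊x * (q : ℝ) ^ (K + 1)⌋ % q).toNat = b) ↔
      x ∈ Set.Ico (((A * q + b : ℕ) : ℝ) / (q : ℝ) ^ (K + 1))
        ((((A * q + b : ℕ) : ℝ) + 1) / (q : ℝ) ^ (K + 1)) := by
  have hq0 : (0 : ℝ) < (q : ℝ) := by exact_mod_cast hq
  have hqK : (0 : ℝ) < (q : ℝ) ^ K := by positivity
  rw [mem_Ico_iff_floor q hq K A, mem_Ico_iff_floor q hq (K + 1) (A * q + b)]
  constructor
  · rintro ⟨h1, h2⟩
    have := (floor_succ_digit q hq K A b x hb h1).1 h2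
    rw [this]; push_cast; ring
  · intro h
    have h1 : ⌊x * (q : ℝ) ^ K⌋ = A := by
      have hle : (((A * q + b : ℕ) : ℤ) : ℝ) ≤ x * (q : ℝ) ^ (K + 1) := by
        rw [← h]; exact Int.floor_le _
      have hlt : x * (q : ℝ) ^ (K + 1) < (((A * q + b : ℕ) : ℤ) : ℝ) + 1 := by
        rw [← h]; exact Int.lt_floor_add_one _
      rw [Int.floor_eq_iff]
      push_cast at hle hlt ⊢
      rw [pow_succ] at hle hlt
      constructor
      · nlinarith
      · nlinarith [(by exact_mod_cast hb : (b : ℝ) + 1 ≤ (q : ℝ))]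
    refine ⟨h1, (floor_succ_digit q hq K A b x hb h1).2 ?_⟩
    rw [h]; push_cast; ring

open scoped Classical in
lemma count_bound (q d n : ℕ) (m ε : ℝ) (P : Finset (Fin d → ℝ))
    (hq : 2 ≤ q) (hd : 0 < d) (hP : IsAlmostNet q d n m ε P) :
    ∀ (s : ℕ) (K a : Fin d → ℕ), (∀ i : Fin d, a i + 1 ≤ q ^ K i) → (∑ i, K i) + s = n →
      (1 - ε) * m * q ^ s ≤
        ((P.filter fun w => ∀ i, w i ∈ Set.Ico ((a i : ℝ) / (q : ℝ) ^ K i)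
            (((a i : ℝ) + 1) / (q : ℝ) ^ K i)).card : ℝ) ∧
      ((P.filter fun w => ∀ i, w i ∈ Set.Ico ((a i : ℝ) / (q : ℝ) ^ K i)
            (((a i : ℝ) + 1) / (q : ℝ) ^ K i)).card : ℝ) ≤ (1 + ε) * m * q ^ s := by
  have hq0 : 0 < q := by omega
  intro s
  induction s with
  | zero =>
    intro K a ha hsum
    set β : Set (Fin d → ℝ) := Set.univ.pi fun i =>
      Set.Ico ((a i : ℝ) / (q : ℝ) ^ K i) (((a i : ℝ) + 1) / (q : ℝ) ^ K i) with hβ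
    have hbb : IsBasicBox q d n β := ⟨K, a, ha, by omega, rfl⟩
    have hcount := hP.2.2 β hbb
    have hset : (P : Set (Fin d → ℝ)) ∩ β =
        ↑(P.filter fun w => ∀ i, w i ∈ Set.Ico ((a i : ℝ) / (q : ℝ) ^ K i)
            (((a i : ℝ) + 1) / (q : ℝ) ^ K i)) := by
      ext w
      simp [hβ, Set.mem_pi]
    rw [hset, Set.ncard_coe_finset] at hcount
    simpa using hcount
  | succ s ih =>
    intro K a ha hsum
    set i₀ : Fin d := ⟨0, hd⟩ with hi₀
    set f : (Fin d → ℝ) → ℕ := fun w => (⌊w i₀ * (q : ℝ) ^ (K i₀ + 1)⌋ % q).toNat with hf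
    have hmaps : ∀ w ∈ P.filter fun w => ∀ i, w i ∈ Set.Ico ((a i : ℝ) / (q : ℝ) ^ K i)
        (((a i : ℝ) + 1) / (q : ℝ) ^ K i), f w ∈ Finset.range q := by
      intro w _
      have h1 := Int.emod_nonneg (⌊w i₀ * (q : ℝ) ^ (K i₀ + 1)⌋) (by exact_mod_cast hq0.ne' : (q:ℤ) ≠ 0)
      have h2 := Int.emod_lt_of_pos (⌊w i₀ * (q : ℝ) ^ (K i₀ + 1)⌋) (by exact_mod_cast hq0 : (0:ℤ) < q)
      simp only [Finset.mem_range, hf]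
      omega
    have hkey := Finset.card_eq_sum_card_fiberwise hmaps
    have hfib : ∀ b ∈ Finset.range q,
        (((P.filter fun w => ∀ i, w i ∈ Set.Ico ((a i : ℝ) / (q : ℝ) ^ K i)
            (((a i : ℝ) + 1) / (q : ℝ) ^ K i)).filter fun w => f w = b)
          = P.filter fun w => ∀ i, w i ∈
              Set.Ico (((Function.update a i₀ (a i₀ * q + b)) i : ℝ) /
                  (q : ℝ) ^ ((Function.update K i₀ (K i₀ + 1)) i))
                ((((Function.update a i₀ (a i₀ * q + b)) i : ℝ) + 1) /
                  (q : ℝ) ^ ((Function.update K i₀ (K i₀ + 1)) i))) := by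
      intro b hb
      rw [Finset.mem_range] at hb
      rw [Finset.filter_filter]
      apply Finset.filter_congr
      intro w _
      constructor
      · rintro ⟨hp, hfb⟩ i
        by_cases hi : i = i₀
        · subst hi
          simp only [Function.update_self]
          exact (split_digit q hq0 (K i₀) (a i₀) b hb (w i₀)).1 ⟨hp i₀, hfb⟩
        · rw [Function.update_of_ne hi, Function.update_of_ne hi]
          exact hp i
      · intro hp'
        have h0 := hp' i₀
        simp only [Function.update_self] at h0
        have h0' := (split_digit q hq0 (K i₀) (a i₀) b hb (w i₀)).2 h0
        refine ⟨fun i => ?_, h0'.2⟩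
        by_cases hi : i = i₀
        · subst hi; exact h0'.1
        · have := hp' i
          rw [Function.update_of_ne hi, Function.update_of_ne hi] at this
          exact this
    rw [Finset.sum_congr rfl (fun b hb => by rw [hfib b hb])] at hkey
    have e1 : ∑ i, Function.update K i₀ (K i₀ + 1) i = (∑ i, K i) + 1 := by
      rw [Finset.sum_update_of_mem (Finset.mem_univ i₀),
        ← Finset.add_sum_erase _ K (Finset.mem_univ i₀), Finset.erase_eq]
      ring
    have hsum' : ∀ b : ℕ, (∑ i, Function.update K i₀ (K i₀ + 1) i) + s = n := by
      intro b
      rw [e1, ← hsum]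
      ring
    have ha' : ∀ b < q, ∀ i : Fin d, (Function.update a i₀ (a i₀ * q + b)) i + 1 ≤
        q ^ (Function.update K i₀ (K i₀ + 1)) i := by
      intro b hb i
      by_cases hi : i = i₀
      · subst hi
        rw [Function.update_self, Function.update_self, pow_succ]
        have := ha i₀
        calc a i₀ * q + b + 1 = a i₀ * q + (b + 1) := by ring
          _ ≤ a i₀ * q + q := Nat.add_le_add_left hb _
          _ = (a i₀ + 1) * q := by ring
          _ ≤ q ^ K i₀ * q := Nat.mul_le_mul_right q (ha i₀)
      · rw [Function.update_of_ne hi, Function.update_of_ne hi]; exact ha i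
    have hbounds := fun b (hb : b ∈ Finset.range q) =>
      ih (Function.update K i₀ (K i₀ + 1)) (Function.update a i₀ (a i₀ * q + b))
        (ha' b (Finset.mem_range.1 hb)) (hsum' b)
    constructor
    · calc (1 - ε) * m * (q : ℝ) ^ (s + 1)
          = ∑ _b ∈ Finset.range q, (1 - ε) * m * (q : ℝ) ^ s := by
            rw [Finset.sum_const, Finset.card_range, nsmul_eq_mul]; ring
        _ ≤ ∑ b ∈ Finset.range q, (((P.filter fun w => ∀ i, w i ∈
              Set.Ico (((Function.update a i₀ (a i₀ * q + b)) i : ℝ) /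
                  (q : ℝ) ^ ((Function.update K i₀ (K i₀ + 1)) i))
                ((((Function.update a i₀ (a i₀ * q + b)) i : ℝ) + 1) /
                  (q : ℝ) ^ ((Function.update K i₀ (K i₀ + 1)) i))).card : ℝ)) :=
            Finset.sum_le_sum (fun b hb => (hbounds b hb).1)
        _ = _ := by rw [hkey]; push_cast; rfl
    · calc ((P.filter fun w => ∀ i, w i ∈ Set.Ico ((a i : ℝ) / (q : ℝ) ^ K i)
            (((a i : ℝ) + 1) / (q : ℝ) ^ K i)).card : ℝ)
          = ∑ b ∈ Finset.range q, (((P.filter fun w => ∀ i, w i ∈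
              Set.Ico (((Function.update a i₀ (a i₀ * q + b)) i : ℝ) /
                  (q : ℝ) ^ ((Function.update K i₀ (K i₀ + 1)) i))
                ((((Function.update a i₀ (a i₀ * q + b)) i : ℝ) + 1) /
                  (q : ℝ) ^ ((Function.update K i₀ (K i₀ + 1)) i))).card : ℝ)) := by
            rw [hkey]; push_cast; rfl
        _ ≤ ∑ _b ∈ Finset.range q, (1 + ε) * m * (q : ℝ) ^ s :=
            Finset.sum_le_sum (fun b hb => (hbounds b hb).2)
        _ = (1 + ε) * m * (q : ℝ) ^ (s + 1) := by
            rw [Finset.sum_const, Finset.card_range, nsmul_eq_mul]; ring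

lemma digit_box_iff (q K' c : ℕ) (hq : 2 ≤ q) (hc : c < q) (x : ℝ)
    (hx : x ∈ Set.Ico (0 : ℝ) (1 / (q : ℝ) ^ K')) :
    qdigit q x (K' + 1) = c ↔
      x ∈ Set.Ico ((c : ℝ) / (q : ℝ) ^ (K' + 1)) (((c : ℝ) + 1) / (q : ℝ) ^ (K' + 1)) := by
  have hq0 : 0 < q := by omega
  have hq0' : (0 : ℝ) < q := by exact_mod_cast hq0
  have hqK : (0 : ℝ) < (q : ℝ) ^ K' := by positivity
  have hx0 : 0 ≤ x * (q : ℝ) ^ (K' + 1) := mul_nonneg hx.1 (by positivity)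
  have hxq : x * (q : ℝ) ^ (K' + 1) < q := by
    have := hx.2
    rw [pow_succ]
    calc x * ((q : ℝ) ^ K' * q) < (1 / (q : ℝ) ^ K') * ((q : ℝ) ^ K' * q) := by
          apply mul_lt_mul_of_pos_right this (by positivity)
      _ = q := by field_simp
  have h0 : (0 : ℤ) ≤ ⌊x * (q : ℝ) ^ (K' + 1)⌋ := Int.floor_nonneg.2 hx0
  have hlt : ⌊x * (q : ℝ) ^ (K' + 1)⌋ < (q : ℤ) := Int.floor_lt.2 (by exact_mod_cast hxq)
  rw [mem_Ico_iff_floor q hq0]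
  unfold qdigit
  have hmod : (⌊x * (q : ℝ) ^ (K' + 1)⌋).toNat % q = (⌊x * (q : ℝ) ^ (K' + 1)⌋).toNat :=
    Nat.mod_eq_of_lt (by omega)
  rw [hmod]
  omega

lemma box_sub (q K' c : ℕ) (hq : 2 ≤ q) (hc : c < q) (x : ℝ)
    (hx : x ∈ Set.Ico ((c : ℝ) / (q : ℝ) ^ (K' + 1)) (((c : ℝ) + 1) / (q : ℝ) ^ (K' + 1))) :
    x ∈ Set.Ico (0 : ℝ) (1 / (q : ℝ) ^ K') := by
  have hq0' : (0 : ℝ) < q := by positivity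
  have hqK : (0 : ℝ) < (q : ℝ) ^ K' := by positivity
  have hqK1 : (0 : ℝ) < (q : ℝ) ^ (K' + 1) := by positivity
  constructor
  · refine le_trans (by positivity) hx.1
  · refine lt_of_lt_of_le hx.2 ?_
    rw [div_le_div_iff₀ hqK1 hqK, pow_succ]
    have : (c : ℝ) + 1 ≤ q := by exact_mod_cast hc
    nlinarith

lemma sum_roots_zero (q : ℕ) (hq : 2 ≤ q) :
    ∑ a : Fin q, Complex.exp (2 * (Real.pi : ℂ) * Complex.I * ((a : ℕ) : ℂ) / q) = 0 := by
  have hq0' : ((q : ℂ)) ≠ 0 := by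
    simp only [ne_eq, Nat.cast_eq_zero]; omega
  set ζ : ℂ := Complex.exp (2 * (Real.pi : ℂ) * Complex.I / q) with hζ
  have hz : ∀ a : ℕ, Complex.exp (2 * (Real.pi : ℂ) * Complex.I * (a : ℂ) / q) = ζ ^ a := by
    intro a
    rw [hζ, ← Complex.exp_nat_mul]
    congr 1
    ring
  have hζq : ζ ^ q = 1 := by
    rw [hζ, ← Complex.exp_nat_mul]
    rw [show (q : ℂ) * (2 * (Real.pi : ℂ) * Complex.I / q) = 2 * (Real.pi : ℂ) * Complex.I by
      field_simp]
    exact Complex.exp_two_pi_mul_I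
  have hζ1 : ζ ≠ 1 := by
    intro h
    rw [hζ, Complex.exp_eq_one_iff] at h
    obtain ⟨z, hz'⟩ := h
    have hπ : (Real.pi : ℂ) ≠ 0 := by exact_mod_cast Real.pi_ne_zero
    have h2πI : (2 * (Real.pi : ℂ) * Complex.I) ≠ 0 := by
      simp [Complex.I_ne_zero, hπ]
    field_simp at hz'
    have h4 : ((z * q : ℤ) : ℂ) * (2 * (Real.pi : ℂ) * Complex.I) =
        ((1 : ℤ) : ℂ) * (2 * (Real.pi : ℂ) * Complex.I) := by
      push_cast; linear_combination (-(2 * (Real.pi : ℂ) * Complex.I)) * hz'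
    have h5 : (z * q : ℤ) = 1 := by exact_mod_cast mul_right_cancel₀ h2πI h4
    have h6 : (q : ℤ) ∣ 1 := ⟨z, by linarith⟩
    have := Int.le_of_dvd one_pos h6
    omega
  calc ∑ a : Fin q, Complex.exp (2 * (Real.pi : ℂ) * Complex.I * ((a : ℕ) : ℂ) / q)
      = ∑ a ∈ Finset.range q, ζ ^ a := by
        rw [Fin.sum_univ_eq_sum_range (fun a => Complex.exp (2 * (Real.pi : ℂ) * Complex.I * ((a : ℕ) : ℂ) / q))]
        exact Finset.sum_congr rfl fun a _ => hz a
    _ = (ζ ^ q - 1) / (ζ - 1) := geom_sum_eq hζ1 q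
    _ = 0 := by rw [hζq]; simp

lemma abs_exp_int (q : ℕ) (hq : 0 < q) (z : ℤ) :
    ‖Complex.exp (2 * (Real.pi : ℂ) * Complex.I * ((z : ℤ) : ℂ) / q)‖ = 1 := by
  have : (2 * (Real.pi : ℂ) * Complex.I * ((z : ℤ) : ℂ) / q) =
      ((2 * Real.pi * (z : ℝ) / q : ℝ) : ℂ) * Complex.I := by
    push_cast; ring
  rw [this, Complex.norm_exp_ofReal_mul_I]

set_option maxHeartbeats 1600000 in
/-- Claim 6: the Gram-type matrix `A = (1/τ) U U*` built from the points of
`P ∩ 𝓑` has all diagonal entries `1` and all off-diagonal entries of absolute value at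
most `2ε`. -/
theorem stmt17 (q d n k m : ℕ) (ε : ℝ) (P : Finset (Fin d → ℝ))
    (hq : 2 ≤ q) (hd : 2 ≤ d) (hk1 : 1 ≤ k) (hk2 : 2 * k ≤ d) (hn : 2 * k ≤ n)
    (hε0 : 0 < ε) (hε : ε ≤ 1 / 2) (hm : 0 < m)
    (hP : IsAlmostNet q d n (m : ℝ) ε P)
    (τ : ℕ) (v : Fin τ → (Fin d → ℝ))
    (hvinj : Function.Injective v)
    (hvrange : Set.range v = (P : Set (Fin d → ℝ)) ∩ Bset q d n k)
    (U : Matrix {J : Finset (Fin d) // J.card = k} (Fin τ) ℂ)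
    (hU : ∀ (J : {J : Finset (Fin d) // J.card = k}) (ℓ : Fin τ),
      U J ℓ = Complex.exp (2 * Real.pi * Complex.I *
        ((∑ j ∈ J.1, Xfun q d n k (v ℓ) j : ℕ) : ℂ) / q))
    (A : Matrix {J : Finset (Fin d) // J.card = k} {J : Finset (Fin d) // J.card = k} ℂ)
    (hA : A = ((τ : ℂ))⁻¹ • (U * U.conjTranspose)) :
    (∀ J, A J J = 1) ∧
    (∀ J₁ J₂, J₁ ≠ J₂ → ‖A J₁ J₂‖ ≤ 2 * ε) := by
  classical
  have hq0 : 0 < q := by omega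
  have hq0' : (0 : ℝ) < q := by exact_mod_cast hq0
  have hd0 : 0 < d := by omega
  have hm1 : (1 : ℝ) ≤ m := by exact_mod_cast hm
  set K' : Fin d → ℕ := fun i => if (i : ℕ) = 0 then n - 2 * k else 0 with hK'
  have hXfun : ∀ (w : Fin d → ℝ) (i : Fin d), Xfun q d n k w i = qdigit q (w i) (K' i + 1) := by
    intro w i; unfold Xfun; by_cases hi : (i : ℕ) = 0 <;> simp [hK', hi]
  have hBmem : ∀ w : Fin d → ℝ,
      w ∈ Bset q d n k ↔ ∀ i, w i ∈ Set.Ico (0 : ℝ) (1 / (q : ℝ) ^ (K' i)) := by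
    intro w
    rw [Bset, Set.mem_univ_pi]
    apply forall_congr'
    intro i
    by_cases hi : (i : ℕ) = 0 <;> simp [hK', hi]
  have hXlt : ∀ (w : Fin d → ℝ) (i : Fin d), Xfun q d n k w i < q := by
    intro w i; unfold Xfun qdigit; split <;> exact Nat.mod_lt _ hq0
  have hsumK' : ∑ i, K' i = n - 2 * k := by
    have h1 : ∀ i : Fin d, K' i = if i = (⟨0, hd0⟩ : Fin d) then n - 2 * k else 0 := by
      intro i
      rw [hK']
      congr 1
      simp [Fin.ext_iff]
    rw [Finset.sum_congr rfl fun i _ => h1 i, Finset.sum_ite_eq' Finset.univ]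
    simp
  -- the main counting fact
  have main_count : ∀ T : Finset (Fin d), T.card ≤ 2 * k → ∀ c : Fin d → Fin q,
      (1 - ε) * m * (q : ℝ) ^ (2 * k - T.card) ≤
        ((Finset.univ.filter fun ℓ : Fin τ =>
            ∀ j ∈ T, Xfun q d n k (v ℓ) j = (c j : ℕ)).card : ℝ) ∧
      ((Finset.univ.filter fun ℓ : Fin τ =>
            ∀ j ∈ T, Xfun q d n k (v ℓ) j = (c j : ℕ)).card : ℝ) ≤
        (1 + ε) * m * (q : ℝ) ^ (2 * k - T.card) := by
    intro T hTc c
    set Kc : Fin d → ℕ := fun i => K' i + (if i ∈ T then 1 else 0) with hKc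
    set ac : Fin d → ℕ := fun i => if i ∈ T then (c i : ℕ) else 0 with hac'
    have hac : ∀ i, ac i + 1 ≤ q ^ Kc i := by
      intro i
      by_cases hiT : i ∈ T
      · have h1 : (c i : ℕ) + 1 ≤ q := (c i).2
        have h2 : q = q ^ 1 := (pow_one q).symm
        have h3 : q ^ 1 ≤ q ^ Kc i := Nat.pow_le_pow_right hq0 (by simp [hKc, hiT])
        simp only [hac', hiT, if_true]
        omega
      · simp only [hac', hiT, if_false]
        have : 0 < q ^ Kc i := Nat.pow_pos hq0
        omega
    have hKcsum : (∑ i, Kc i) + (2 * k - T.card) = n := by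
      have h1 : ∑ i, Kc i = (∑ i, K' i) + ∑ i, (if i ∈ T then 1 else 0) :=
        Finset.sum_add_distrib
      have h2 : ∑ i : Fin d, (if i ∈ T then (1 : ℕ) else 0) = T.card := by
        rw [Finset.sum_ite_mem, Finset.univ_inter, Finset.sum_const, smul_eq_mul, mul_one]
      rw [h1, h2, hsumK']
      omega
    have hIco0 : ∀ i : Fin d, Set.Ico ((0 : ℝ) / (q : ℝ) ^ (K' i)) (((0 : ℝ) + 1) / (q : ℝ) ^ (K' i))
        = Set.Ico (0 : ℝ) (1 / (q : ℝ) ^ (K' i)) := by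
      intro i; rw [zero_div, zero_add]
    have hcard : (Finset.univ.filter fun ℓ : Fin τ =>
        ∀ j ∈ T, Xfun q d n k (v ℓ) j = (c j : ℕ)).card =
        (P.filter fun w => ∀ i, w i ∈ Set.Ico ((ac i : ℝ) / (q : ℝ) ^ Kc i)
          (((ac i : ℝ) + 1) / (q : ℝ) ^ Kc i)).card := by
      apply Finset.card_bij (fun ℓ _ => v ℓ)
      · intro ℓ hℓ
        rw [Finset.mem_filter] at hℓ ⊢
        have hwPB : v ℓ ∈ (P : Set (Fin d → ℝ)) ∩ Bset q d n k := by
          rw [← hvrange]; exact Set.mem_range_self ℓ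
        have hwB := (hBmem (v ℓ)).1 hwPB.2
        refine ⟨hwPB.1, fun i => ?_⟩
        by_cases hiT : i ∈ T
        · have hdig : qdigit q (v ℓ i) (K' i + 1) = (c i : ℕ) := by
            rw [← hXfun]; exact hℓ.2 i hiT
          have := (digit_box_iff q (K' i) (c i) hq (c i).2 (v ℓ i) (hwB i)).1 hdig
          simpa [hKc, hac', hiT] using this
        · have := hwB i
          rw [← hIco0 i] at this
          simpa [hKc, hac', hiT] using this
      · intro ℓ₁ _ ℓ₂ _ h; exact hvinj h
      · intro w hw
        rw [Finset.mem_filter] at hw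
        have hwB : w ∈ Bset q d n k := by
          rw [hBmem]
          intro i
          by_cases hiT : i ∈ T
          · refine box_sub q (K' i) (c i) hq (c i).2 (w i) ?_
            have := hw.2 i
            simpa [hKc, hac', hiT] using this
          · have := hw.2 i
            rw [← hIco0 i]
            simpa [hKc, hac', hiT] using this
        have hwr : w ∈ Set.range v := by rw [hvrange]; exact ⟨hw.1, hwB⟩
        obtain ⟨ℓ, hℓ⟩ := hwr
        refine ⟨ℓ, Finset.mem_filter.2 ⟨Finset.mem_univ _, fun j hj => ?_⟩, hℓ⟩
        rw [hℓ, hXfun]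
        refine (digit_box_iff q (K' j) (c j) hq (c j).2 (w j) ((hBmem w).1 hwB j)).2 ?_
        have := hw.2 j
        simpa [hKc, hac', hj] using this
    rw [hcard]
    exact count_bound q d n (m : ℝ) ε P hq hd0 hP (2 * k - T.card) Kc ac hac hKcsum
  -- τ bounds
  have hτeq : (Finset.univ.filter fun ℓ : Fin τ =>
      ∀ j ∈ (∅ : Finset (Fin d)), Xfun q d n k (v ℓ) j = ((fun _ => (⟨0, hq0⟩ : Fin q)) j : ℕ)).card = τ := by
    simp
  have hτbounds := main_count ∅ (by simp) (fun _ => (⟨0, hq0⟩ : Fin q))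
  rw [hτeq] at hτbounds
  simp only [Finset.card_empty, Nat.sub_zero] at hτbounds
  have hτlb : (1 - ε) * m * (q : ℝ) ^ (2 * k) ≤ (τ : ℝ) := hτbounds.1
  have hτpos : (0 : ℝ) < τ := by
    have hqpow : (1 : ℝ) ≤ (q : ℝ) ^ (2 * k) := one_le_pow₀ (by exact_mod_cast hq0 : (1:ℝ) ≤ q)
    nlinarith
  have hτne : (τ : ℂ) ≠ 0 := by
    simp only [ne_eq, Nat.cast_eq_zero]
    exact_mod_cast hτpos.ne'
  constructor
  · -- diagonal
    intro J
    rw [hA, Matrix.smul_apply, smul_eq_mul, Matrix.mul_apply]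
    have hone : ∀ ℓ : Fin τ, U J ℓ * U.conjTranspose ℓ J = 1 := by
      intro ℓ
      rw [Matrix.conjTranspose_apply, hU J ℓ]
      set w : ℂ := 2 * (Real.pi : ℂ) * Complex.I *
        ((∑ j ∈ J.1, Xfun q d n k (v ℓ) j : ℕ) : ℂ) / q with hw
      have hcw : star w = -w := by
        rw [hw]
        simp only [Complex.star_def, map_div₀, map_mul, Complex.conj_I, Complex.conj_ofReal,
          map_natCast, map_ofNat]
        ring
      have hstar : star (Complex.exp w) = Complex.exp (-w) := by
        rw [← hcw, Complex.star_def, ← Complex.exp_conj]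
      rw [hstar, ← Complex.exp_add, add_neg_cancel, Complex.exp_zero]
    rw [Finset.sum_congr rfl fun ℓ _ => hone ℓ, Finset.sum_const, Finset.card_univ,
      Fintype.card_fin, nsmul_eq_mul, mul_one, inv_mul_cancel₀ hτne]
  · -- off-diagonal
    intro J₁ J₂ hJ
    set T₁ : Finset (Fin d) := J₁.1 \ J₂.1 with hT₁def
    set T₂ : Finset (Fin d) := J₂.1 \ J₁.1 with hT₂def
    have hdisj : Disjoint T₁ T₂ := disjoint_sdiff_sdiff
    have hcard12 : T₁.card = T₂.card := by
      have h1 := Finset.card_sdiff_add_card_inter J₁.1 J₂.1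
      have h2 := Finset.card_sdiff_add_card_inter J₂.1 J₁.1
      rw [Finset.inter_comm] at h2
      rw [J₁.2] at h1
      rw [J₂.2] at h2
      rw [hT₁def, hT₂def]
      omega
    have hT₁ne : T₁.Nonempty := by
      rw [Finset.nonempty_iff_ne_empty]
      intro h
      have hsub : J₁.1 ⊆ J₂.1 := by
        rw [← Finset.sdiff_eq_empty_iff_subset]; exact h
      exact hJ (Subtype.ext (Finset.eq_of_subset_of_card_le hsub (by rw [J₁.2, J₂.2])))
    set T : Finset (Fin d) := T₁ ∪ T₂ with hTdef
    set t : ℕ := T₁.card with htdef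
    have htk : t ≤ k := by
      have h := Finset.card_le_card (Finset.sdiff_subset : J₁.1 \ J₂.1 ⊆ J₁.1)
      rw [J₁.2] at h; exact h
    have hTcard : T.card = 2 * t := by
      rw [hTdef, Finset.card_union_of_disjoint hdisj, ← hcard12, htdef]; omega
    -- digit vector of a point
    set g : Fin τ → (Fin d → Fin q) := fun ℓ j =>
      if j ∈ T then (⟨Xfun q d n k (v ℓ) j, hXlt _ _⟩ : Fin q) else (⟨0, hq0⟩ : Fin q) with hg
    set tfin : Finset (Fin d → Fin q) :=
      Fintype.piFinset (fun j => if j ∈ T then (Finset.univ : Finset (Fin q))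
        else {(⟨0, hq0⟩ : Fin q)}) with htfin
    have hgmem : ∀ ℓ, g ℓ ∈ tfin := by
      intro ℓ
      rw [htfin, Fintype.mem_piFinset]
      intro j
      by_cases hj : j ∈ T <;> simp [hg, hj]
    have htfincard : tfin.card = q ^ (2 * t) := by
      rw [htfin, Fintype.card_piFinset]
      have hc : ∀ j : Fin d, ((if j ∈ T then (Finset.univ : Finset (Fin q))
          else {(⟨0, hq0⟩ : Fin q)}).card) = if j ∈ T then q else 1 := by
        intro j; by_cases hj : j ∈ T <;> simp [hj]
      rw [Finset.prod_congr rfl fun j _ => hc j, Finset.prod_ite_mem, Finset.univ_inter,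
        Finset.prod_const, hTcard]
    set σfun : (Fin d → Fin q) → ℤ :=
      fun c => (∑ j ∈ T₁, ((c j : ℕ) : ℤ)) - ∑ j ∈ T₂, ((c j : ℕ) : ℤ) with hσ
    set E : (Fin d → Fin q) → ℂ :=
      fun c => Complex.exp (2 * (Real.pi : ℂ) * Complex.I * ((σfun c : ℤ) : ℂ) / q) with hE
    -- each matrix entry term
    have hterm : ∀ ℓ : Fin τ, U J₁ ℓ * U.conjTranspose ℓ J₂ = E (g ℓ) := by
      intro ℓ
      rw [Matrix.conjTranspose_apply, hU J₁ ℓ, hU J₂ ℓ]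
      set N₁ : ℕ := ∑ j ∈ J₁.1, Xfun q d n k (v ℓ) j with hN₁
      set N₂ : ℕ := ∑ j ∈ J₂.1, Xfun q d n k (v ℓ) j with hN₂
      have hcast : (N₁ : ℤ) - (N₂ : ℤ) = σfun (g ℓ) := by
        have e₁ : (N₁ : ℤ) = (∑ j ∈ T₁, (Xfun q d n k (v ℓ) j : ℤ))
            + ∑ j ∈ J₁.1 ∩ J₂.1, (Xfun q d n k (v ℓ) j : ℤ) := by
          rw [hN₁]
          push_cast
          rw [← Finset.sum_sdiff (Finset.inter_subset_left : J₁.1 ∩ J₂.1 ⊆ J₁.1),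
            Finset.sdiff_inter_self_left]
        have e₂ : (N₂ : ℤ) = (∑ j ∈ T₂, (Xfun q d n k (v ℓ) j : ℤ))
            + ∑ j ∈ J₁.1 ∩ J₂.1, (Xfun q d n k (v ℓ) j : ℤ) := by
          rw [hN₂]
          push_cast
          rw [← Finset.sum_sdiff (Finset.inter_subset_left : J₂.1 ∩ J₁.1 ⊆ J₂.1),
            Finset.sdiff_inter_self_left, Finset.inter_comm]
        have e₃ : ∀ j ∈ T₁, ((g ℓ j : ℕ) : ℤ) = (Xfun q d n k (v ℓ) j : ℤ) := by
          intro j hj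
          have hjT : j ∈ T := Finset.mem_union_left _ hj
          simp [hg, hjT]
        have e₄ : ∀ j ∈ T₂, ((g ℓ j : ℕ) : ℤ) = (Xfun q d n k (v ℓ) j : ℤ) := by
          intro j hj
          have hjT : j ∈ T := Finset.mem_union_right _ hj
          simp [hg, hjT]
        simp only [hσ]
        rw [Finset.sum_congr rfl e₃, Finset.sum_congr rfl e₄]
        linarith [e₁, e₂]
      have hst : star (2 * (Real.pi : ℂ) * Complex.I * (N₂ : ℂ) / q)
          = -(2 * (Real.pi : ℂ) * Complex.I * (N₂ : ℂ) / q) := by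
        simp only [Complex.star_def, map_div₀, map_mul, Complex.conj_I, Complex.conj_ofReal,
          map_natCast, map_ofNat]
        ring
      have hstar : star (Complex.exp (2 * (Real.pi : ℂ) * Complex.I * (N₂ : ℂ) / q))
          = Complex.exp (star (2 * (Real.pi : ℂ) * Complex.I * (N₂ : ℂ) / q)) := by
        rw [Complex.star_def, ← Complex.exp_conj]
      rw [hstar, hst, ← Complex.exp_add, hE]
      congr 1
      have hσc : ((σfun (g ℓ) : ℤ) : ℂ) = (N₁ : ℂ) - (N₂ : ℂ) := by
        rw [← hcast]; push_cast; ring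
      rw [hσc]
      ring
    set Nf : (Fin d → Fin q) → ℕ :=
      fun c => (Finset.univ.filter fun ℓ : Fin τ => g ℓ = c).card with hNf
    -- fiber decomposition of the sum
    have hsum1 : ∑ ℓ : Fin τ, E (g ℓ) = ∑ c ∈ tfin, (Nf c : ℂ) * E c := by
      rw [← Finset.sum_fiberwise_of_maps_to' (fun ℓ _ => hgmem ℓ) E]
      refine Finset.sum_congr rfl fun c _ => ?_
      rw [Finset.sum_const, nsmul_eq_mul, hNf]
    -- fiber counts equal digit-box counts
    have hfiber_eq : ∀ c ∈ tfin, (Finset.univ.filter fun ℓ : Fin τ => g ℓ = c) =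
        (Finset.univ.filter fun ℓ : Fin τ => ∀ j ∈ T, Xfun q d n k (v ℓ) j = (c j : ℕ)) := by
      intro c hc
      apply Finset.filter_congr
      intro ℓ _
      rw [htfin, Fintype.mem_piFinset] at hc
      constructor
      · intro h j hj
        rw [← h]
        simp [hg, hj]
      · intro h
        funext j
        by_cases hj : j ∈ T
        · have := h j hj
          apply Fin.ext
          simpa [hg, hj] using this
        · have hcj := hc j
          rw [if_neg hj, Finset.mem_singleton] at hcj
          rw [hcj]
          simp [hg, hj]
    have hNc : ∀ c ∈ tfin,
        (1 - ε) * m * (q : ℝ) ^ (2 * k - 2 * t) ≤ (Nf c : ℝ) ∧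
        (Nf c : ℝ) ≤ (1 + ε) * m * (q : ℝ) ^ (2 * k - 2 * t) := by
      intro c hc
      have hmc := main_count T (by rw [hTcard]; omega) c
      rw [hTcard] at hmc
      simp only [hNf]
      rw [hfiber_eq c hc]
      exact hmc
    -- the character sum over tfin vanishes
    obtain ⟨j₀, hj₀⟩ := hT₁ne
    have hj₀T : j₀ ∈ T := Finset.mem_union_left _ hj₀
    have hj₀T₂ : j₀ ∉ T₂ := Finset.disjoint_left.1 hdisj hj₀
    have hσupd : ∀ (c : Fin d → Fin q) (a : Fin q),
        σfun (Function.update c j₀ a) = ((a : ℕ) : ℤ)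
          + σfun (Function.update c j₀ (⟨0, hq0⟩ : Fin q)) := by
      intro c a
      have h1 : ∀ z : Fin q, ∑ j ∈ T₁, ((Function.update c j₀ z j : ℕ) : ℤ)
          = ((z : ℕ) : ℤ) + ∑ j ∈ T₁.erase j₀, ((c j : ℕ) : ℤ) := by
        intro z
        rw [← Finset.add_sum_erase _ _ hj₀]
        congr 1
        · rw [Function.update_self]
        · refine Finset.sum_congr rfl fun j hj => ?_
          rw [Function.update_of_ne (Finset.ne_of_mem_erase hj)]
      have h2 : ∀ z : Fin q, ∑ j ∈ T₂, ((Function.update c j₀ z j : ℕ) : ℤ)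
          = ∑ j ∈ T₂, ((c j : ℕ) : ℤ) := by
        intro z
        refine Finset.sum_congr rfl fun j hj => ?_
        rw [Function.update_of_ne (by rintro rfl; exact hj₀T₂ hj)]
      simp only [hσ]
      rw [h1, h1, h2, h2]
      push_cast
      ring
    have hsumE : ∑ c ∈ tfin, E c = 0 := by
      have hmapsto : ∀ c ∈ tfin, c j₀ ∈ (Finset.univ : Finset (Fin q)) :=
        fun _ _ => Finset.mem_univ _
      rw [← Finset.sum_fiberwise_of_maps_to hmapsto E]
      have hfib0 : ∀ a : Fin q, (∑ c ∈ tfin.filter fun c => c j₀ = a, E c)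
          = Complex.exp (2 * (Real.pi : ℂ) * Complex.I * ((a : ℕ) : ℂ) / q) *
            ∑ c ∈ tfin.filter fun c => c j₀ = (⟨0, hq0⟩ : Fin q), E c := by
        intro a
        rw [Finset.mul_sum]
        refine Finset.sum_nbij' (i := fun c => Function.update c j₀ (⟨0, hq0⟩ : Fin q))
          (j := fun c => Function.update c j₀ a) ?_ ?_ ?_ ?_ ?_
        · intro c hcmem
          rw [Finset.mem_filter] at hcmem ⊢
          rw [htfin, Fintype.mem_piFinset] at hcmem ⊢
          refine ⟨fun j => ?_, Function.update_self _ _ _⟩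
          by_cases hjj : j = j₀
          · subst hjj
            rw [Function.update_self, if_pos hj₀T]
            exact Finset.mem_univ _
          · rw [Function.update_of_ne hjj]
            exact hcmem.1 j
        · intro c hcmem
          rw [Finset.mem_filter] at hcmem ⊢
          rw [htfin, Fintype.mem_piFinset] at hcmem ⊢
          refine ⟨fun j => ?_, Function.update_self _ _ _⟩
          by_cases hjj : j = j₀
          · subst hjj
            rw [Function.update_self, if_pos hj₀T]
            exact Finset.mem_univ _
          · rw [Function.update_of_ne hjj]
            exact hcmem.1 j
        · intro c hcmem
          rw [Finset.mem_filter] at hcmem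
          rw [Function.update_idem, ← hcmem.2, Function.update_eq_self]
        · intro c hcmem
          rw [Finset.mem_filter] at hcmem
          rw [Function.update_idem, ← hcmem.2, Function.update_eq_self]
        · intro c hcmem
          rw [Finset.mem_filter] at hcmem
          have hc' : c = Function.update c j₀ a := by
            rw [← hcmem.2, Function.update_eq_self]
          simp only [hE]
          rw [← Complex.exp_add]
          congr 1
          conv_lhs => rw [hc']
          rw [hσupd c a]
          push_cast
          ring
      rw [Finset.sum_congr rfl fun a _ => hfib0 a, ← Finset.sum_mul, sum_roots_zero q hq,
        zero_mul]
    -- put everything together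
    have hABe : A J₁ J₂ = (τ : ℂ)⁻¹ * ∑ c ∈ tfin, (Nf c : ℂ) * E c := by
      rw [hA, Matrix.smul_apply, smul_eq_mul, Matrix.mul_apply]
      congr 1
      rw [Finset.sum_congr rfl fun ℓ _ => hterm ℓ]
      exact hsum1
    set M : ℝ := (m : ℝ) * (q : ℝ) ^ (2 * k - 2 * t) with hM
    have hM0 : 0 ≤ M := by positivity
    have hsub : ∑ c ∈ tfin, (Nf c : ℂ) * E c
        = ∑ c ∈ tfin, ((Nf c : ℂ) - (M : ℂ)) * E c := by
      have h := Finset.sum_sub_distrib (s := tfin) (f := fun c => (Nf c : ℂ) * E c)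
        (g := fun c => (M : ℂ) * E c)
      rw [Finset.sum_congr rfl (fun c _ => (sub_mul (Nf c : ℂ) (M : ℂ) (E c)).symm)] at h
      rw [h, ← Finset.mul_sum, hsumE, mul_zero, sub_zero]
    have hEabs : ∀ c, ‖E c‖ = 1 := fun c => abs_exp_int q hq0 (σfun c)
    have habs : ‖∑ c ∈ tfin, ((Nf c : ℂ) - (M : ℂ)) * E c‖
        ≤ (tfin.card : ℝ) * (ε * M) := by
      refine le_trans (norm_sum_le _ _) ?_
      have hstep : ∀ c ∈ tfin, ‖((Nf c : ℂ) - (M : ℂ)) * E c‖ ≤ ε * M := by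
        intro c hc
        rw [norm_mul, hEabs c, mul_one]
        have hcast : ((Nf c : ℂ) - (M : ℂ)) = (((Nf c : ℝ) - M : ℝ) : ℂ) := by
          push_cast; ring
        rw [hcast, Complex.norm_real, Real.norm_eq_abs]
        have hb := hNc c hc
        have hM' : (1 - ε) * (m : ℝ) * (q : ℝ) ^ (2 * k - 2 * t) = M - ε * M := by
          rw [hM]; ring
        have hM'' : (1 + ε) * (m : ℝ) * (q : ℝ) ^ (2 * k - 2 * t) = M + ε * M := by
          rw [hM]; ring
        rw [abs_le]
        exact ⟨by linarith [hb.1], by linarith [hb.2]⟩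
      calc ∑ c ∈ tfin, ‖((Nf c : ℂ) - (M : ℂ)) * E c‖
          ≤ ∑ _c ∈ tfin, ε * M := Finset.sum_le_sum hstep
        _ = (tfin.card : ℝ) * (ε * M) := by rw [Finset.sum_const, nsmul_eq_mul]
    rw [hABe, hsub, norm_mul]
    have habsinv : ‖(τ : ℂ)⁻¹‖ = (τ : ℝ)⁻¹ := by
      rw [norm_inv]
      congr 1
      exact Complex.norm_natCast τ
    rw [habsinv]
    have hqpow2 : (q : ℝ) ^ (2 * t) * (q : ℝ) ^ (2 * k - 2 * t) = (q : ℝ) ^ (2 * k) := by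
      rw [← pow_add]
      congr 1
      omega
    have hcardcast : (tfin.card : ℝ) = (q : ℝ) ^ (2 * t) := by
      rw [htfincard]; push_cast; ring
    have h2 : (tfin.card : ℝ) * (ε * M) = ε * ((m : ℝ) * (q : ℝ) ^ (2 * k)) := by
      rw [hcardcast, hM, ← hqpow2]; ring
    have hQ : (0 : ℝ) < (q : ℝ) ^ (2 * k) := by positivity
    have hmQ : (0 : ℝ) < (m : ℝ) * (q : ℝ) ^ (2 * k) := by positivity
    calc (τ : ℝ)⁻¹ * ‖∑ c ∈ tfin, ((Nf c : ℂ) - (M : ℂ)) * E c‖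
        ≤ (τ : ℝ)⁻¹ * ((tfin.card : ℝ) * (ε * M)) :=
          mul_le_mul_of_nonneg_left habs (by positivity)
      _ = ε * ((m : ℝ) * (q : ℝ) ^ (2 * k)) / τ := by rw [h2]; ring
      _ ≤ 2 * ε := by
          rw [div_le_iff₀ hτpos]
          nlinarith [mul_le_mul_of_nonneg_left hτlb (by linarith : (0 : ℝ) ≤ 2 * ε),
            mul_nonneg (mul_nonneg hε0.le (by linarith : (0 : ℝ) ≤ 1 - 2 * ε)) hmQ.le]
end

section
/- Let q ≥ 2, d ≥ 2, n, k be integers with 1 ≤ k ≤ d/2 and n ≥ 2k, let ε > 0, and let P ⊆ [0,1]^d be an (m, ε)-almost net in base q of size q^n·m. Let 𝓑 = [0, 1/q^{n−2k}) × [0,1)^{d−1}. For any two distinct k-element subsets J_1, J_2 of {1,…,d} and any τ ∈ {0,1,…,q−1}, the set B_τ = { v ∈ 𝓑 : ∑_{j∈J_1} X_j(v) − ∑_{j∈J_2} X_j(v) ≡ τ (mod q) } can be partitioned into q^{|J_1 Δ J_2|−1} basic boxes in base q, each of volume q^{−n+2k−|J_1 Δ J_2|}; consequently, |P ∩ B_τ|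 is between q^{2k−1}(1−ε)m and q^{2k−1}(1+ε)m. -/
open Finset

lemma digit_iff {q : ℕ} (hq : 2 ≤ q) (t c : ℕ) (hc : c < q) (x : ℝ) :
    x ∈ Set.Ico ((c:ℝ)/(q:ℝ)^(t+1)) (((c:ℝ)+1)/(q:ℝ)^(t+1)) ↔
      (x ∈ Set.Ico (0:ℝ) (1/(q:ℝ)^t) ∧ qdigit q x (t+1) = c) := by
  have hq0 : (0:ℝ) < (q:ℝ) := by positivity
  have hp : (0:ℝ) < (q:ℝ)^(t+1) := by positivity
  have hpt : (0:ℝ) < (q:ℝ)^t := by positivity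
  constructor
  · rintro ⟨h1, h2⟩
    have hx0 : 0 ≤ x := le_trans (by positivity) h1
    have hcb : (c:ℝ) ≤ x * (q:ℝ)^(t+1) := by
      rw [div_le_iff₀ hp] at h1; linarith
    have hcb2 : x * (q:ℝ)^(t+1) < (c:ℝ) + 1 := by
      rw [lt_div_iff₀ hp] at h2; linarith
    have hfl : ⌊x * (q:ℝ)^(t+1)⌋ = (c:ℤ) := by
      rw [Int.floor_eq_iff]
      push_cast
      exact ⟨hcb, hcb2⟩
    refine ⟨⟨hx0, ?_⟩, ?_⟩
    · have hcq : (c:ℝ) + 1 ≤ (q:ℝ) := by exact_mod_cast hc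
      have : ((c:ℝ)+1)/(q:ℝ)^(t+1) ≤ 1/(q:ℝ)^t := by
        rw [div_le_div_iff₀ hp hpt, pow_succ]
        nlinarith
      linarith
    · simp [qdigit, hfl, Nat.mod_eq_of_lt hc]
  · rintro ⟨⟨hx0, hx1⟩, hd⟩
    have hub : x * (q:ℝ)^(t+1) < (q:ℝ) := by
      calc x * (q:ℝ)^(t+1) = x * (q:ℝ)^t * q := by rw [pow_succ]; ring
        _ < (1/(q:ℝ)^t) * (q:ℝ)^t * q := by
            have := mul_lt_mul_of_pos_right (mul_lt_mul_of_pos_right hx1 hpt) hq0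
            linarith
        _ = q := by field_simp
    set f := ⌊x * (q:ℝ)^(t+1)⌋ with hf
    have hf0 : 0 ≤ f := Int.floor_nonneg.2 (by positivity)
    have hfq : f < (q:ℤ) := Int.floor_lt.2 (by exact_mod_cast hub)
    have htn : (f.toNat : ℤ) = f := Int.toNat_of_nonneg hf0
    have htq : f.toNat < q := by omega
    have : f.toNat = c := by
      simpa [qdigit, ← hf, Nat.mod_eq_of_lt htq] using hd
    have hfc : f = (c:ℤ) := by omega
    have h1 := Int.floor_le (x * (q:ℝ)^(t+1))
    have h2 := Int.lt_floor_add_one (x * (q:ℝ)^(t+1))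
    rw [← hf, hfc] at h1 h2
    push_cast at h1 h2
    constructor
    · rw [div_le_iff₀ hp]; linarith
    · rw [lt_div_iff₀ hp]; linarith

lemma split_iff {q : ℕ} (hq : 2 ≤ q) (t a : ℕ) (x : ℝ) :
    x ∈ Set.Ico ((a:ℝ)/(q:ℝ)^t) (((a:ℝ)+1)/(q:ℝ)^t) ↔
      ∃ r : Fin q, x ∈ Set.Ico (((a*q+(r:ℕ) : ℕ):ℝ)/(q:ℝ)^(t+1))
        ((((a*q+(r:ℕ) : ℕ):ℝ)+1)/(q:ℝ)^(t+1)) := by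
  have hq0 : (0:ℝ) < (q:ℝ) := by positivity
  have hp : (0:ℝ) < (q:ℝ)^(t+1) := by positivity
  have hpt : (0:ℝ) < (q:ℝ)^t := by positivity
  have hps : ((q:ℝ))^(t+1) = (q:ℝ)^t * q := by rw [pow_succ]
  constructor
  · rintro ⟨h1, h2⟩
    have hb1 : ((a*q : ℕ):ℝ) ≤ x * (q:ℝ)^(t+1) := by
      rw [div_le_iff₀ hpt] at h1
      push_cast
      rw [hps]
      nlinarith
    have hb2 : x * (q:ℝ)^(t+1) < ((a*q+q : ℕ):ℝ) := by
      rw [lt_div_iff₀ hpt] at h2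
      push_cast
      rw [hps]
      nlinarith
    set f := ⌊x * (q:ℝ)^(t+1)⌋ with hf
    have hl : (↑(a*q) : ℤ) ≤ f := Int.le_floor.2 (by exact_mod_cast hb1)
    have hu : f < (↑(a*q+q) : ℤ) := Int.floor_lt.2 (by exact_mod_cast hb2)
    have hf0 : 0 ≤ f := le_trans (by positivity) hl
    have htn : (f.toNat : ℤ) = f := Int.toNat_of_nonneg hf0
    refine ⟨⟨f.toNat - a*q, by omega⟩, ?_, ?_⟩
    · have : ((a*q + (f.toNat - a*q) : ℕ) : ℝ) = (f : ℝ) := by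
        push_cast [show a*q + (f.toNat - a*q) = f.toNat by omega]
        exact_mod_cast htn
      rw [this, div_le_iff₀ hp]
      exact Int.floor_le _
    · have : ((a*q + (f.toNat - a*q) : ℕ) : ℝ) = (f : ℝ) := by
        push_cast [show a*q + (f.toNat - a*q) = f.toNat by omega]
        exact_mod_cast htn
      rw [this, lt_div_iff₀ hp]
      exact Int.lt_floor_add_one _
  · rintro ⟨r, h1, h2⟩
    have hr : (r:ℕ) < q := r.2
    constructor
    · refine le_trans ?_ h1
      rw [div_le_div_iff₀ hpt hp, hps]
      push_cast
      nlinarith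
    · refine lt_of_lt_of_le h2 ?_
      rw [div_le_div_iff₀ hp hpt, hps]
      push_cast
      have : ((r:ℕ):ℝ) + 1 ≤ (q:ℝ) := by exact_mod_cast hr
      nlinarith

lemma Ico_nat_disj {Q : ℝ} (hQ : 0 < Q) {b b' : ℕ} (h : b ≠ b') :
    Disjoint (Set.Ico ((b:ℝ)/Q) (((b:ℝ)+1)/Q)) (Set.Ico ((b':ℝ)/Q) (((b':ℝ)+1)/Q)) := by
  rw [Set.disjoint_left]
  rintro x ⟨h1, h2⟩ ⟨h3, h4⟩
  rw [div_le_iff₀ hQ] at h1 h3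
  rw [lt_div_iff₀ hQ] at h2 h4
  have hb1 : (b:ℝ) < (b':ℝ) + 1 := by linarith
  have hb2 : (b':ℝ) < (b:ℝ) + 1 := by linarith
  have : b < b' + 1 := by exact_mod_cast hb1
  have : b' < b + 1 := by exact_mod_cast hb2
  omega

lemma box_split {q d n' : ℕ} (hq : 2 ≤ q) (hd : 0 < d) {β : Set (Fin d → ℝ)}
    (hβ : IsBasicBox q d n' β) :
    ∃ γ : Fin q → Set (Fin d → ℝ),
      (∀ r, IsBasicBox q d (n' + 1) (γ r)) ∧
      (∀ r r', r ≠ r' → Disjoint (γ r) (γ r')) ∧ (⋃ r, γ r) = β := by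
  obtain ⟨K, A, hA, hsum, rfl⟩ := hβ
  set i₀ : Fin d := ⟨0, hd⟩ with hi₀
  set K' : Fin d → ℕ := Function.update K i₀ (K i₀ + 1) with hK'
  refine ⟨fun r => Set.univ.pi fun i =>
    Set.Ico ((Function.update A i₀ (A i₀ * q + (r:ℕ)) i : ℝ) / (q:ℝ) ^ K' i)
      (((Function.update A i₀ (A i₀ * q + (r:ℕ)) i : ℝ) + 1) / (q:ℝ) ^ K' i), ?_, ?_, ?_⟩
  · intro r
    refine ⟨K', Function.update A i₀ (A i₀ * q + (r:ℕ)), ?_, ?_, rfl⟩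
    · intro i
      by_cases h : i = i₀
      · subst h
        simp only [hK', Function.update_self]
        have hr : (r:ℕ) + 1 ≤ q := r.2
        calc A i₀ * q + (r:ℕ) + 1 ≤ A i₀ * q + q := by omega
          _ = (A i₀ + 1) * q := by ring
          _ ≤ q ^ K i₀ * q := Nat.mul_le_mul_right _ (hA i₀)
          _ = q ^ (K i₀ + 1) := (pow_succ q (K i₀)).symm
      · simp only [hK', Function.update_of_ne h]
        exact hA i
    · rw [hK', Finset.sum_update_of_mem (Finset.mem_univ i₀)]
      rw [Finset.sum_eq_add_sum_sdiff_singleton_of_mem (Finset.mem_univ i₀) K] at hsum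
      omega
  · intro r r' hrr'
    rw [Set.disjoint_left]
    intro v hv hv'
    have h1 := hv i₀ (Set.mem_univ i₀)
    have h2 := hv' i₀ (Set.mem_univ i₀)
    simp only [Function.update_self] at h1 h2
    have hb : A i₀ * q + (r:ℕ) ≠ A i₀ * q + (r':ℕ) := by
      intro h; exact hrr' (Fin.ext (by omega))
    exact Set.disjoint_left.1 (Ico_nat_disj (by positivity) hb) h1 h2
  · ext v
    simp only [Set.mem_iUnion, Set.mem_pi, Set.mem_univ, forall_true_left]
    constructor
    · rintro ⟨r, h⟩ i
      by_cases hi : i = i₀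
      · subst hi
        have := h i₀
        simp only [Function.update_self, hK'] at this
        exact (split_iff hq (K i₀) (A i₀) (v i₀)).2 ⟨r, this⟩
      · have := h i
        simpa only [Function.update_of_ne hi, hK'] using this
    · intro h
      obtain ⟨r, hr⟩ := (split_iff hq (K i₀) (A i₀) (v i₀)).1 (h i₀)
      refine ⟨r, fun i => ?_⟩
      by_cases hi : i = i₀
      · subst hi
        simpa only [Function.update_self, hK'] using hr
      · simpa only [Function.update_of_ne hi, hK'] using h i

lemma ncard_partition {α : Type*} (P : Finset α) {ι : Type*} [Fintype ι]
    (γ : ι → Set α) (B : Set α)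
    (hdisj : ∀ i j, i ≠ j → Disjoint (γ i) (γ j)) (huni : (⋃ i, γ i) = B) :
    ((P : Set α) ∩ B).ncard = ∑ i, ((P : Set α) ∩ γ i).ncard := by
  classical
  have hfi : ∀ s : Set α, ((P : Set α) ∩ s) = ↑(P.filter (· ∈ s)) := by
    intro s; ext x; simp [and_comm]
  have h1 : ((P : Set α) ∩ B) = ↑(Finset.univ.biUnion fun i => P.filter (· ∈ γ i)) := by
    rw [← huni]; ext x
    simp only [Set.mem_inter_iff, Finset.coe_biUnion, Finset.coe_filter, Set.mem_iUnion,
      Finset.mem_coe, Finset.mem_univ, Set.mem_setOf_eq, true_and, Finset.mem_univ]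
    tauto
  rw [h1, Set.ncard_coe_finset, Finset.card_biUnion]
  · refine Finset.sum_congr rfl fun i _ => ?_
    rw [hfi (γ i), Set.ncard_coe_finset]
  · intro i _ j _ hij
    rw [Function.onFun, Finset.disjoint_left]
    intro x hx hx'
    simp only [Finset.mem_filter] at hx hx'
    exact Set.disjoint_left.1 (hdisj i j hij) hx.2 hx'.2

lemma count_aux {q d n : ℕ} {m ε : ℝ} {P : Finset (Fin d → ℝ)}
    (hq : 2 ≤ q) (hd : 0 < d) (hP : IsAlmostNet q d n m ε P) :
    ∀ j n' β, n' + j = n → IsBasicBox q d n' β →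
      (q:ℝ)^j * ((1-ε)*m) ≤ (((P : Set (Fin d → ℝ)) ∩ β).ncard : ℝ) ∧
      (((P : Set (Fin d → ℝ)) ∩ β).ncard : ℝ) ≤ (q:ℝ)^j * ((1+ε)*m) := by
  intro j
  induction j with
  | zero =>
    intro n' β hn' hβ
    have hn'' : n' = n := by omega
    subst hn''
    have := hP.2.2 β hβ
    simpa using this
  | succ j ih =>
    intro n' β hn' hβ
    obtain ⟨γ, hbox, hdisj, huni⟩ := box_split hq hd hβ
    have key : (((P : Set (Fin d → ℝ)) ∩ β).ncard : ℝ)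
        = ∑ r : Fin q, (((P : Set (Fin d → ℝ)) ∩ γ r).ncard : ℝ) := by
      rw [ncard_partition P γ β hdisj huni]
      push_cast
      rfl
    have hih : ∀ r : Fin q,
        (q:ℝ)^j * ((1-ε)*m) ≤ (((P : Set (Fin d → ℝ)) ∩ γ r).ncard : ℝ) ∧
        (((P : Set (Fin d → ℝ)) ∩ γ r).ncard : ℝ) ≤ (q:ℝ)^j * ((1+ε)*m) :=
      fun r => ih (n' + 1) (γ r) (by omega) (hbox r)
    constructor
    · rw [key]
      calc (q:ℝ)^(j+1) * ((1-ε)*m) = ∑ _r : Fin q, (q:ℝ)^j * ((1-ε)*m) := by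
            rw [Finset.sum_const, Finset.card_univ, Fintype.card_fin, nsmul_eq_mul,
              pow_succ]
            ring
        _ ≤ _ := Finset.sum_le_sum fun r _ => (hih r).1
    · rw [key]
      calc ∑ r : Fin q, (((P : Set (Fin d → ℝ)) ∩ γ r).ncard : ℝ)
            ≤ ∑ _r : Fin q, (q:ℝ)^j * ((1+ε)*m) := Finset.sum_le_sum fun r _ => (hih r).2
        _ = (q:ℝ)^(j+1) * ((1+ε)*m) := by
            rw [Finset.sum_const, Finset.card_univ, Fintype.card_fin, nsmul_eq_mul,
              pow_succ]
            ring


lemma digit_iff0 {q : ℕ} (hq : 2 ≤ q) (c : ℕ) (hc : c < q) (x : ℝ) :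
    x ∈ Set.Ico ((c:ℝ)/(q:ℝ)) (((c:ℝ)+1)/(q:ℝ)) ↔
      (x ∈ Set.Ico (0:ℝ) 1 ∧ qdigit q x 1 = c) := by
  have := digit_iff hq 0 c hc x
  simpa using this

set_option maxHeartbeats 1000000 in
lemma equiv_constrained {d q : ℕ} [NeZero q] (S : Finset (Fin d)) (σ : Fin d → ZMod q)
    (p : Fin d) (hp : p ∈ S) (hσp : σ p * σ p = 1) (τ : ZMod q) :
    Nonempty ({c : Fin d → ZMod q // (∀ i, i ∉ S → c i = 0) ∧ ∑ i ∈ S, σ i * c i = τ}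
      ≃ ({j // j ∈ S.erase p} → ZMod q)) := by
  classical
  refine ⟨Equiv.ofBijective (fun c j => c.1 j.1) ⟨?_, ?_⟩⟩
  · rintro ⟨c, hc0, hcs⟩ ⟨c', hc0', hcs'⟩ h
    have hagree : ∀ i : Fin d, ∀ hi : i ∈ S.erase p, c i = c' i := by
      intro i hi
      exact congrFun h ⟨i, hi⟩
    have hsum_eq : ∑ j ∈ S.erase p, σ j * c j = ∑ j ∈ S.erase p, σ j * c' j :=
      Finset.sum_congr rfl fun j hj => by rw [hagree j hj]
    refine Subtype.ext (funext fun i => ?_)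
    show c i = c' i
    by_cases hi : i ∈ S.erase p
    · exact hagree i hi
    · by_cases hip : i = p
      · rw [← Finset.add_sum_erase S (fun i => σ i * c i) hp] at hcs
        rw [← Finset.add_sum_erase S (fun i => σ i * c' i) hp] at hcs'
        have hpp : σ p * c p = σ p * c' p := by
          have := hcs.trans hcs'.symm
          rw [hsum_eq] at this
          exact add_right_cancel this
        have : σ p * (σ p * c p) = σ p * (σ p * c' p) := by rw [hpp]
        rw [← mul_assoc, ← mul_assoc, hσp, one_mul, one_mul] at this
        rw [hip]
        exact this
      · have hiS : i ∉ S := fun h' => hi (Finset.mem_erase.2 ⟨hip, h'⟩)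
        rw [hc0 i hiS, hc0' i hiS]
  · intro f
    set R : ZMod q := ∑ j ∈ S.erase p, σ j * (if hj : j ∈ S.erase p then f ⟨j, hj⟩ else 0)
      with hR
    refine ⟨⟨fun i => if h : i ∈ S.erase p then f ⟨i, h⟩ else
      if i = p then σ p * (τ - R) else 0, fun i hi => ?_, ?_⟩, ?_⟩
    · beta_reduce
      have h1 : i ∉ S.erase p := fun h => hi (Finset.mem_of_mem_erase h)
      have h2 : i ≠ p := fun h => hi (h ▸ hp)
      rw [dif_neg h1, if_neg h2]
    · simp only
      rw [← Finset.add_sum_erase S _ hp]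
      rw [dif_neg (Finset.notMem_erase p S), if_pos rfl]
      have h1 : (∑ i ∈ S.erase p, σ i *
          (if h : i ∈ S.erase p then f ⟨i, h⟩ else if i = p then σ p * (τ - R) else 0)) = R := by
        rw [hR]
        exact Finset.sum_congr rfl fun i hi => by beta_reduce; simp only [dif_pos hi]
      rw [h1, ← mul_assoc, hσp, one_mul]
      ring
    · funext j
      show (if h : j.1 ∈ S.erase p then f ⟨j.1, h⟩ else _) = f j
      rw [dif_pos j.2]

/-- for distinct `k`-subsets `J₁, J₂` and each residue `τ`, the set
`B_τ = {v ∈ 𝓑 : ∑_{j∈J₁} X_j(v) − ∑_{j∈J₂} X_j(v) ≡ τ (mod q)}` partitions into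
`q^(|J₁ Δ J₂|−1)` basic boxes of volume `q^(−n+2k−|J₁ Δ J₂|)`; consequently,
`q^(2k−1)(1−ε)m ≤ |P ∩ B_τ| ≤ q^(2k−1)(1+ε)m`. -/
theorem stmt18 (q d n k m : ℕ) (ε : ℝ) (P : Finset (Fin d → ℝ))
    (hq : 2 ≤ q) (hd : 2 ≤ d) (hk1 : 1 ≤ k) (hk2 : 2 * k ≤ d) (hn : 2 * k ≤ n)
    (hε0 : 0 < ε)
    (hP : IsAlmostNet q d n (m : ℝ) ε P)
    (J₁ J₂ : Finset (Fin d)) (hJ₁ : J₁.card = k) (hJ₂ : J₂.card = k) (hne : J₁ ≠ J₂)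
    (τ : ZMod q)
    (Bτ : Set (Fin d → ℝ))
    (hBτ : Bτ = {v ∈ Bset q d n k |
      (∑ j ∈ J₁, ((Xfun q d n k v j : ℕ) : ZMod q))
        - (∑ j ∈ J₂, ((Xfun q d n k v j : ℕ) : ZMod q)) = τ}) :
    (∃ boxes : Fin (q ^ (((J₁ \ J₂) ∪ (J₂ \ J₁)).card - 1)) → Set (Fin d → ℝ),
      (∀ i, IsBasicBox q d (n - 2 * k + ((J₁ \ J₂) ∪ (J₂ \ J₁)).card) (boxes i)) ∧
      (∀ i j, i ≠ j → Disjoint (boxes i) (boxes j)) ∧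
      (⋃ i, boxes i) = Bτ) ∧
    ((q : ℝ) ^ (2 * k - 1) * (1 - ε) * m
        ≤ (((P : Set (Fin d → ℝ)) ∩ Bτ).ncard : ℝ) ∧
      (((P : Set (Fin d → ℝ)) ∩ Bτ).ncard : ℝ)
        ≤ (q : ℝ) ^ (2 * k - 1) * (1 + ε) * m) := by
    classical
  haveI : NeZero q := ⟨by omega⟩
  have hd0 : 0 < d := by omega
  have hs1 : 1 ≤ ((J₁ \ J₂) ∪ (J₂ \ J₁)).card := by
    rcases Finset.eq_empty_or_nonempty ((J₁ \ J₂) ∪ (J₂ \ J₁)) with h | h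
    · exfalso
      rw [Finset.union_eq_empty, Finset.sdiff_eq_empty_iff_subset,
        Finset.sdiff_eq_empty_iff_subset] at h
      exact hne (Finset.Subset.antisymm h.1 h.2)
    · exact Finset.card_pos.2 h
  have hs2 : ((J₁ \ J₂) ∪ (J₂ \ J₁)).card ≤ 2 * k := by
    have h1 := Finset.card_union_le (J₁ \ J₂) (J₂ \ J₁)
    have h2 : (J₁ \ J₂).card ≤ k := hJ₁ ▸ Finset.card_le_card Finset.sdiff_subset
    have h3 : (J₂ \ J₁).card ≤ k := hJ₂ ▸ Finset.card_le_card Finset.sdiff_subset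
    omega
  have hmain : (∃ boxes : Fin (q ^ (((J₁ \ J₂) ∪ (J₂ \ J₁)).card - 1)) → Set (Fin d → ℝ),
      (∀ i, IsBasicBox q d (n - 2 * k + ((J₁ \ J₂) ∪ (J₂ \ J₁)).card) (boxes i)) ∧
      (∀ i j, i ≠ j → Disjoint (boxes i) (boxes j)) ∧
      (⋃ i, boxes i) = Bτ) := by
    set S : Finset (Fin d) := (J₁ \ J₂) ∪ (J₂ \ J₁) with hSdef
    obtain ⟨p, hp⟩ : S.Nonempty := Finset.card_pos.1 (by omega)
    set σ : Fin d → ZMod q :=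
      fun i => if i ∈ J₁ \ J₂ then 1 else if i ∈ J₂ \ J₁ then -1 else 0 with hσdef
    have hσ1 : ∀ i ∈ J₁ \ J₂, σ i = 1 := fun i hi => by
      simp only [hσdef]; rw [if_pos hi]
    have hσ2 : ∀ i ∈ J₂ \ J₁, σ i = -1 := fun i hi => by
      have h1 : i ∉ J₁ \ J₂ := fun h => (Finset.mem_sdiff.1 hi).2 (Finset.mem_sdiff.1 h).1
      simp only [hσdef]; rw [if_neg h1, if_pos hi]
    have hσsq : ∀ i ∈ S, σ i * σ i = 1 := by
      intro i hi
      rw [hSdef, Finset.mem_union] at hi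
      rcases hi with h | h
      · rw [hσ1 i h]; ring
      · rw [hσ2 i h]; ring
    have hL : ∀ x : Fin d → ZMod q,
        ∑ i ∈ S, σ i * x i = ∑ j ∈ J₁, x j - ∑ j ∈ J₂, x j := by
      intro x
      have e1 : ∑ i ∈ J₁ \ J₂, σ i * x i = ∑ i ∈ J₁ \ J₂, x i :=
        Finset.sum_congr rfl fun i hi => by rw [hσ1 i hi, one_mul]
      have e2 : ∑ i ∈ J₂ \ J₁, σ i * x i = -∑ i ∈ J₂ \ J₁, x i := by
        rw [← Finset.sum_neg_distrib]
        exact Finset.sum_congr rfl fun i hi => by rw [hσ2 i hi]; ring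
      rw [hSdef, Finset.sum_union disjoint_sdiff_sdiff, e1, e2, ← sub_eq_add_neg,
        Finset.sum_sdiff_sub_sum_sdiff]
    have hXlt : ∀ (v : Fin d → ℝ) i, Xfun q d n k v i < q := by
      intro v i
      unfold Xfun qdigit
      split <;> exact Nat.mod_lt _ (by omega)
    set K : Fin d → ℕ := fun i => if (i : ℕ) = 0 then (if i ∈ S then n - 2*k + 1 else n - 2*k)
      else (if i ∈ S then 1 else 0) with hK
    set A : (Fin d → ZMod q) → Fin d → ℕ := fun c i => if i ∈ S then (c i).val else 0 with hA
    set box : (Fin d → ZMod q) → Set (Fin d → ℝ) := fun c => Set.univ.pi fun i =>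
      Set.Ico ((A c i : ℝ) / (q:ℝ) ^ K i) (((A c i : ℝ) + 1) / (q:ℝ) ^ K i) with hbox
    have hKsum : ∑ i, K i = n - 2*k + S.card := by
      have h1 : ∀ i : Fin d,
          K i = (if (i:ℕ) = 0 then n - 2*k else 0) + (if i ∈ S then 1 else 0) := by
        intro i
        simp only [hK]
        by_cases h0 : (i:ℕ) = 0 <;> by_cases hiS : i ∈ S <;> simp [h0, hiS]
      rw [Finset.sum_congr rfl fun i _ => h1 i, Finset.sum_add_distrib]
      congr 1
      · have h2 : ∀ i : Fin d, ((i:ℕ) = 0) = (i = (⟨0, hd0⟩ : Fin d)) := fun i => by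
          simp [Fin.ext_iff]
        simp only [h2]
        rw [Finset.sum_ite_eq' Finset.univ (⟨0, hd0⟩ : Fin d) (fun _ => n - 2*k)]
        simp
      · rw [Fintype.sum_ite_mem]
        simp
    have hAle : ∀ c i, A c i + 1 ≤ q ^ K i := by
      intro c i
      by_cases hiS : i ∈ S
      · rw [show A c i = (c i).val by simp [hA, hiS]]
        have hv : (c i).val < q := ZMod.val_lt (c i)
        have hK1 : 1 ≤ K i := by
          simp only [hK]
          by_cases h0 : (i:ℕ) = 0 <;> simp [h0, hiS] <;> omega
        calc (c i).val + 1 ≤ q := hv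
          _ = q ^ 1 := (pow_one q).symm
          _ ≤ q ^ K i := Nat.pow_le_pow_right (by omega) hK1
      · rw [show A c i = 0 by simp [hA, hiS]]
        simpa using Nat.one_le_pow (K i) q (by omega)
    have hboxmem : ∀ (c : Fin d → ZMod q) (v : Fin d → ℝ),
        v ∈ box c ↔ (v ∈ Bset q d n k ∧ ∀ i ∈ S, Xfun q d n k v i = (c i).val) := by
      intro c v
      have hcoord : ∀ i : Fin d,
          (v i ∈ Set.Ico ((A c i : ℝ) / (q:ℝ) ^ K i) (((A c i : ℝ) + 1) / (q:ℝ) ^ K i)) ↔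
          ((v i ∈ (if (i:ℕ) = 0 then Set.Ico (0:ℝ) (1/(q:ℝ)^(n-2*k)) else Set.Ico (0:ℝ) 1)) ∧
            (i ∈ S → Xfun q d n k v i = (c i).val)) := by
        intro i
        by_cases h0 : (i:ℕ) = 0 <;> by_cases hiS : i ∈ S
        · rw [show K i = (n - 2*k) + 1 by simp [hK, h0, hiS],
            show A c i = (c i).val by simp [hA, hiS],
            digit_iff hq (n-2*k) _ (ZMod.val_lt (c i)) (v i)]
          simp [Xfun, h0, hiS]
        · rw [show K i = n - 2*k by simp [hK, h0, hiS],
            show A c i = 0 by simp [hA, hiS]]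
          norm_num [hiS, h0]
        · rw [show K i = 1 by simp [hK, h0, hiS],
            show A c i = (c i).val by simp [hA, hiS], pow_one,
            digit_iff0 hq _ (ZMod.val_lt (c i)) (v i)]
          simp [Xfun, h0, hiS]
        · rw [show K i = 0 by simp [hK, h0, hiS],
            show A c i = 0 by simp [hA, hiS], pow_zero]
          norm_num [hiS, h0]
      rw [show box c = Set.univ.pi (fun i =>
        Set.Ico ((A c i : ℝ) / (q:ℝ) ^ K i) (((A c i : ℝ) + 1) / (q:ℝ) ^ K i)) by rw [hbox]]
      rw [Set.mem_univ_pi]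
      rw [show (v ∈ Bset q d n k) = ∀ i : Fin d, v i ∈ (if (i:ℕ) = 0 then
        Set.Ico (0:ℝ) (1/(q:ℝ)^(n-2*k)) else Set.Ico (0:ℝ) 1) from by
          rw [Bset, Set.mem_univ_pi]]
      constructor
      · intro hv
        exact ⟨fun i => ((hcoord i).1 (hv i)).1, fun i hi => ((hcoord i).1 (hv i)).2 hi⟩
      · rintro ⟨hB, hX⟩ i
        exact (hcoord i).2 ⟨hB i, fun hi => hX i hi⟩
    obtain ⟨E⟩ := equiv_constrained S σ p hp (hσsq p hp) τ
    have hcardI : Nat.card {c : Fin d → ZMod q //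
        (∀ i, i ∉ S → c i = 0) ∧ ∑ i ∈ S, σ i * c i = τ} = q ^ (S.card - 1) := by
      rw [Nat.card_congr E, Nat.card_fun, Nat.card_zmod, Nat.card_eq_finsetCard,
        Finset.card_erase_of_mem hp]
    have eqv := (Finite.equivFinOfCardEq hcardI).symm
    refine ⟨fun i => box (eqv i).1, ?_, ?_, ?_⟩
    · intro i
      refine ⟨K, A (eqv i).1, hAle _, hKsum, ?_⟩
      rw [hbox]
    · intro i j hij
      have hne' : ((eqv i).1 : Fin d → ZMod q) ≠ (eqv j).1 := by
        intro h
        exact hij (eqv.injective (Subtype.ext h))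
      obtain ⟨a, ha⟩ := Function.ne_iff.1 hne'
      have haS : a ∈ S := by
        by_contra h
        rw [(eqv i).2.1 a h, (eqv j).2.1 a h] at ha
        exact ha rfl
      rw [Set.disjoint_left]
      intro v hv hv'
      have h1 := ((hboxmem _ v).1 hv).2 a haS
      have h2 := ((hboxmem _ v).1 hv').2 a haS
      exact ha (ZMod.val_injective q (h1.symm.trans h2))
    · rw [hBτ]
      ext v
      simp only [Set.mem_iUnion, Set.mem_setOf_eq]
      constructor
      · rintro ⟨i, hvi⟩
        obtain ⟨hB, hX⟩ := (hboxmem _ v).1 hvi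
        refine ⟨hB, ?_⟩
        rw [← hL (fun j => ((Xfun q d n k v j : ℕ) : ZMod q))]
        have heq : ∑ i' ∈ S, σ i' * ((Xfun q d n k v i' : ℕ) : ZMod q)
            = ∑ i' ∈ S, σ i' * (eqv i).1 i' :=
          Finset.sum_congr rfl fun j hj => by
            rw [hX j hj, ZMod.natCast_rightInverse ((eqv i).1 j)]
        rw [heq]
        exact (eqv i).2.2
      · rintro ⟨hB, hcond⟩
        have hc₀I : (∀ i, i ∉ S →
              (if i ∈ S then ((Xfun q d n k v i : ℕ) : ZMod q) else 0) = 0) ∧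
            ∑ i ∈ S, σ i * (if i ∈ S then ((Xfun q d n k v i : ℕ) : ZMod q) else 0) = τ := by
          constructor
          · intro i hi; rw [if_neg hi]
          · have heq : ∑ i ∈ S, σ i * (if i ∈ S then ((Xfun q d n k v i : ℕ) : ZMod q) else 0)
                = ∑ i ∈ S, σ i * ((Xfun q d n k v i : ℕ) : ZMod q) :=
              Finset.sum_congr rfl fun j hj => by rw [if_pos hj]
            rw [heq, hL]
            exact hcond
        refine ⟨eqv.symm ⟨fun i => if i ∈ S then ((Xfun q d n k v i : ℕ) : ZMod q) else 0,
          hc₀I⟩, ?_⟩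
        show v ∈ box (eqv (eqv.symm _)).1
        rw [Equiv.apply_symm_apply]
        apply (hboxmem _ v).2
        refine ⟨hB, fun i hi => ?_⟩
        show Xfun q d n k v i
          = (if i ∈ S then ((Xfun q d n k v i : ℕ) : ZMod q) else 0).val
        rw [if_pos hi, ZMod.val_cast_of_lt (hXlt v i)]
  refine ⟨hmain, ?_⟩
  obtain ⟨boxes, hbox2, hdisj, huni⟩ := hmain
  have hpart := ncard_partition P boxes Bτ hdisj huni
  have hbound : ∀ i, (q:ℝ)^(2*k - ((J₁ \ J₂) ∪ (J₂ \ J₁)).card)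
        * ((1-ε)*(m:ℝ)) ≤ (((P : Set (Fin d → ℝ)) ∩ boxes i).ncard : ℝ) ∧
      (((P : Set (Fin d → ℝ)) ∩ boxes i).ncard : ℝ)
        ≤ (q:ℝ)^(2*k - ((J₁ \ J₂) ∪ (J₂ \ J₁)).card) * ((1+ε)*(m:ℝ)) :=
    fun i => count_aux hq hd0 hP (2*k - ((J₁ \ J₂) ∪ (J₂ \ J₁)).card)
      (n - 2*k + ((J₁ \ J₂) ∪ (J₂ \ J₁)).card) (boxes i) (by omega) (hbox2 i)
  have hkey : (((P : Set (Fin d → ℝ)) ∩ Bτ).ncard : ℝ)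
      = ∑ i : Fin (q ^ (((J₁ \ J₂) ∪ (J₂ \ J₁)).card - 1)),
        (((P : Set (Fin d → ℝ)) ∩ boxes i).ncard : ℝ) := by
    rw [hpart]; push_cast; rfl
  have hpow : (q:ℝ) ^ (((J₁ \ J₂) ∪ (J₂ \ J₁)).card - 1)
      * (q:ℝ) ^ (2*k - ((J₁ \ J₂) ∪ (J₂ \ J₁)).card) = (q:ℝ) ^ (2*k - 1) := by
    rw [← pow_add]; congr 1; omega
  have hconst : ∀ x : ℝ, (∑ _i : Fin (q ^ (((J₁ \ J₂) ∪ (J₂ \ J₁)).card - 1)),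
      (q:ℝ)^(2*k - ((J₁ \ J₂) ∪ (J₂ \ J₁)).card) * x) = (q:ℝ)^(2*k-1) * x := by
    intro x
    rw [Finset.sum_const, Finset.card_univ, Fintype.card_fin, nsmul_eq_mul,
      Nat.cast_pow, ← mul_assoc, hpow]
  constructor
  · rw [hkey, show (q:ℝ)^(2*k-1) * (1-ε) * (m:ℝ) = (q:ℝ)^(2*k-1) * ((1-ε) * (m:ℝ)) by ring,
      ← hconst ((1-ε) * (m:ℝ))]
    exact Finset.sum_le_sum fun i _ => (hbound i).1
  · rw [hkey, show (q:ℝ)^(2*k-1) * (1+ε) * (m:ℝ) = (q:ℝ)^(2*k-1) * ((1+ε) * (m:ℝ)) by ring,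
      ← hconst ((1+ε) * (m:ℝ))]
    exact Finset.sum_le_sum fun i _ => (hbound i).2
end
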